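/- arXiv:2511.07030 — 2 statements merged into one kernel-verified Lean document; each statement's English description precedes it below -/
import Mathlib

section
/- Let ψ, (ψ_q)_{q≥q₀} : ℝ^m → ℝ be bounded functions with a common modulus of continuity ω, with ψ_q → ψ uniformly on the ball B_{1+‖g‖₀}(x). Assume g(·,u,y) satisfies |g(x,u,y) − g(x',u,y)| ≤ g₁·|x−x'| and |g| ≤ ‖g‖₀ for all u, y. Then for any r < r', there exist q₀ large and δ > 0 such that U(ψ_q, x', r) ⊆ U(ψ_{q'}, x, r') for all x' ∈ B_δ(x) and all q, q' ∈ [q₀, ∞] (where ψ_∞ = ψ). -/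
open MeasureTheory Filter

/-- The state-constrained control set. -/
def Uset {m : ℕ} {U : Type*} (g : EuclideanSpace ℝ (Fin m) → U → ℝ → EuclideanSpace ℝ (Fin m))
    (μ : MeasureTheory.Measure ℝ) (φ : EuclideanSpace ℝ (Fin m) → ℝ)
    (z : EuclideanSpace ℝ (Fin m)) (s : ℝ) : Set U :=
  {u : U | ∀ᵐ y ∂μ, φ (z + g z u y) ≤ s}

lemma uset_mono {m : ℕ} {U : Type*}
    (g : EuclideanSpace ℝ (Fin m) → U → ℝ → EuclideanSpace ℝ (Fin m))
    (μ : MeasureTheory.Measure ℝ) (φ φ' : EuclideanSpace ℝ (Fin m) → ℝ)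
    (x x' : EuclideanSpace ℝ (Fin m)) (r r' c : ℝ)
    (h : ∀ u y, φ' (x + g x u y) ≤ φ (x' + g x' u y) + c) (hc : r + c ≤ r') :
    Uset g μ φ x' r ⊆ Uset g μ φ' x r' := by
  intro u hu
  simp only [Uset, Set.mem_setOf_eq] at hu ⊢
  refine hu.mono fun y hy => ?_
  have := h u y
  linarith

/-- Proposition 6, assertion 2: stability of the state-constrained control sets.
The index set `[q₀, ∞]` is covered by giving the inclusions for all finite
`q, q' ≥ q₀` as well as for the limit function `ψ = ψ_∞` in either slot. -/
theorem stmt_13 {m : ℕ} {U : Type*} [MetricSpace U] [CompactSpace U]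
    (ψ : EuclideanSpace ℝ (Fin m) → ℝ) (ψq : ℝ → EuclideanSpace ℝ (Fin m) → ℝ)
    (Mb : ℝ) (hbdd : ∀ z, |ψ z| ≤ Mb) (hbddq : ∀ q z, |ψq q z| ≤ Mb)
    (ω : ℝ → ℝ) (hωmono : Monotone ω) (hωnonneg : ∀ t, 0 ≤ ω t)
    (hω0 : ∀ ε > (0 : ℝ), ∃ δ > (0 : ℝ), ∀ t, 0 ≤ t → t ≤ δ → ω t ≤ ε)
    (hmod : ∀ z z', |ψ z - ψ z'| ≤ ω ‖z - z'‖)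
    (hmodq : ∀ q z z', |ψq q z - ψq q z'| ≤ ω ‖z - z'‖)
    (g : EuclideanSpace ℝ (Fin m) → U → ℝ → EuclideanSpace ℝ (Fin m))
    (g₀ g₁ : ℝ)
    (hg₀ : ∀ z u y, ‖g z u y‖ ≤ g₀)
    (hg₁ : ∀ z z' u y, ‖g z u y - g z' u y‖ ≤ g₁ * ‖z - z'‖)
    (μ : Measure ℝ) [IsProbabilityMeasure μ]
    (x : EuclideanSpace ℝ (Fin m))
    (hconv : TendstoUniformlyOn ψq ψ atTop (Metric.closedBall x (1 + g₀)))
    (r r' : ℝ) (hrr' : r < r') :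
    ∃ q₀ : ℝ, ∃ δ > (0 : ℝ), ∀ x' ∈ Metric.closedBall x δ,
      (∀ q q', q₀ ≤ q → q₀ ≤ q' →
        Uset g μ (ψq q) x' r ⊆ Uset g μ (ψq q') x r') ∧
      (∀ q, q₀ ≤ q → Uset g μ (ψq q) x' r ⊆ Uset g μ ψ x r') ∧
      (∀ q', q₀ ≤ q' → Uset g μ ψ x' r ⊆ Uset g μ (ψq q') x r') ∧
      Uset g μ ψ x' r ⊆ Uset g μ ψ x r' := by
  set ε : ℝ := (r' - r) / 4 with hε_def
  have hε : 0 < ε := by simp [hε_def]; linarith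
  obtain ⟨δ₀, hδ₀pos, hδ₀⟩ := hω0 ε hε
  obtain ⟨q₀, hq₀⟩ := (Metric.tendstoUniformlyOn_iff.mp hconv ε hε).exists_forall_of_atTop
  set δ : ℝ := min 1 (δ₀ / (1 + |g₁|)) with hδ_def
  have h1g₁ : (0:ℝ) < 1 + |g₁| := by positivity
  have hδpos : 0 < δ := lt_min one_pos (by positivity)
  refine ⟨q₀, δ, hδpos, fun x' hx' => ?_⟩
  have hx'd : ‖x - x'‖ ≤ δ := by
    rw [Metric.mem_closedBall, dist_comm] at hx'
    simpa [dist_eq_norm] using hx'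
  -- membership of the relevant points in the ball
  have hA : ∀ u y, x + g x u y ∈ Metric.closedBall x (1 + g₀) := by
    intro u y
    have := hg₀ x u y
    have hg₀nn : 0 ≤ g₀ := le_trans (norm_nonneg _) this
    simp only [Metric.mem_closedBall, dist_eq_norm]
    have : ‖x + g x u y - x‖ = ‖g x u y‖ := by congr 1; abel
    rw [this]; linarith [hg₀ x u y]
  have hB : ∀ u y, x' + g x' u y ∈ Metric.closedBall x (1 + g₀) := by
    intro u y
    simp only [Metric.mem_closedBall, dist_eq_norm]
    have h1 : x' + g x' u y - x = (x' - x) + g x' u y := by abel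
    have h2 : ‖x' - x‖ ≤ δ := by rw [norm_sub_rev]; exact hx'd
    have hδ1 : δ ≤ 1 := min_le_left _ _
    calc ‖x' + g x' u y - x‖ ≤ ‖x' - x‖ + ‖g x' u y‖ := by rw [h1]; exact norm_add_le _ _
      _ ≤ 1 + g₀ := add_le_add (h2.trans hδ1) (hg₀ x' u y)
  -- distance between the two evaluation points
  have hAB : ∀ u y, ‖(x + g x u y) - (x' + g x' u y)‖ ≤ δ₀ := by
    intro u y
    have h1 : (x + g x u y) - (x' + g x' u y) = (x - x') + (g x u y - g x' u y) := by abel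
    have h2 : ‖g x u y - g x' u y‖ ≤ |g₁| * δ := by
      calc ‖g x u y - g x' u y‖ ≤ g₁ * ‖x - x'‖ := hg₁ x x' u y
        _ ≤ |g₁| * ‖x - x'‖ := by
            exact mul_le_mul_of_nonneg_right (le_abs_self g₁) (norm_nonneg _)
        _ ≤ |g₁| * δ := mul_le_mul_of_nonneg_left hx'd (abs_nonneg _)
    have hδδ₀ : (1 + |g₁|) * δ ≤ δ₀ := by
      have : δ ≤ δ₀ / (1 + |g₁|) := min_le_right _ _
      calc (1 + |g₁|) * δ ≤ (1 + |g₁|) * (δ₀ / (1 + |g₁|)) :=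
            mul_le_mul_of_nonneg_left this h1g₁.le
        _ = δ₀ := by field_simp
    calc ‖(x + g x u y) - (x' + g x' u y)‖ ≤ ‖x - x'‖ + ‖g x u y - g x' u y‖ := by
          rw [h1]; exact norm_add_le _ _
      _ ≤ δ + |g₁| * δ := add_le_add hx'd h2
      _ = (1 + |g₁|) * δ := by ring
      _ ≤ δ₀ := hδδ₀
  have hωbd : ∀ u y, ω ‖(x + g x u y) - (x' + g x' u y)‖ ≤ ε := fun u y =>
    hδ₀ _ (norm_nonneg _) (hAB u y)
  have hclose : ∀ q z, q₀ ≤ q → z ∈ Metric.closedBall x (1 + g₀) → |ψ z - ψq q z| ≤ ε := by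
    intro q z hq hz
    have := hq₀ q hq z hz
    rw [Real.dist_eq] at this
    exact this.le
  have hc : r + 3 * ε ≤ r' := by rw [hε_def]; linarith
  refine ⟨?_, ?_, ?_, ?_⟩
  · intro q q' hq hq'
    refine uset_mono g μ (ψq q) (ψq q') x x' r r' (3 * ε) (fun u y => ?_) hc
    set A := x + g x u y
    set B := x' + g x' u y
    have e1 : |ψq q' A - ψq q' B| ≤ ε := (hmodq q' A B).trans (hωbd u y)
    have e2 : |ψ B - ψq q' B| ≤ ε := hclose q' B hq' (hB u y)
    have e3 : |ψ B - ψq q B| ≤ ε := hclose q B hq (hB u y)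
    have := abs_le.mp e1; have := abs_le.mp e2; have := abs_le.mp e3
    obtain ⟨a1, a2⟩ := abs_le.mp e1
    obtain ⟨b1, b2⟩ := abs_le.mp e2
    obtain ⟨c1, c2⟩ := abs_le.mp e3
    linarith
  · intro q hq
    refine uset_mono g μ (ψq q) ψ x x' r r' (3 * ε) (fun u y => ?_) hc
    set A := x + g x u y
    set B := x' + g x' u y
    obtain ⟨a1, a2⟩ := abs_le.mp ((hmod A B).trans (hωbd u y))
    obtain ⟨c1, c2⟩ := abs_le.mp (hclose q B hq (hB u y))
    linarith
  · intro q' hq'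
    refine uset_mono g μ ψ (ψq q') x x' r r' (3 * ε) (fun u y => ?_) hc
    set A := x + g x u y
    set B := x' + g x' u y
    obtain ⟨a1, a2⟩ := abs_le.mp ((hmodq q' A B).trans (hωbd u y))
    obtain ⟨b1, b2⟩ := abs_le.mp (hclose q' B hq' (hB u y))
    linarith
  · refine uset_mono g μ ψ ψ x x' r r' (3 * ε) (fun u y => ?_) hc
    obtain ⟨a1, a2⟩ := abs_le.mp ((hmod _ _).trans (hωbd u y))
    linarith
end

section
/- Let c₀(i, p) = λ·E·u·Σ_{j=1}^n ( (Σ_{k=1}^n i_k)/(n·p_j) − i_j )⁺ with λ, E, u > 0, i ∈ [0,1]^n, p ∈ [1,∞)^n. Then c₀ cannot be written as Σ_{j=1}^n c_{0,j}(i_j, p_j) with each c_{0,j} nonnegative, unless c₀ ≡ 0; in fact, if such a decomposition with nonnegative c_{0,j} exists on [0,1]^n × [1,∞)^n, then all c_{0,j} = 0. -/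
open Finset

theorem stmt_16 (n : ℕ) (hn : 1 ≤ n) (l E u : ℝ) (hl : 0 < l) (hE : 0 < E) (hu : 0 < u)
    (c : Fin n → ℝ → ℝ → ℝ)
    (hc_nonneg : ∀ j x y, x ∈ Set.Icc (0 : ℝ) 1 → 1 ≤ y → 0 ≤ c j x y)
    (hdecomp : ∀ (i p : Fin n → ℝ), (∀ j, i j ∈ Set.Icc (0 : ℝ) 1) → (∀ j, 1 ≤ p j) →
      l * E * u * ∑ j, max ((∑ k, i k) / (n * p j) - i j) 0 = ∑ j, c j (i j) (p j)) :
    ∀ j x y, x ∈ Set.Icc (0 : ℝ) 1 → 1 ≤ y → c j x y = 0 := by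
  intro j x y hx hy
  have hkey := hdecomp (fun _ => x) (fun _ => y) (fun _ => hx) (fun _ => hy)
  have hn0 : (0:ℝ) < n := by exact_mod_cast hn
  have hy0 : (0:ℝ) < y := lt_of_lt_of_le one_pos hy
  have hterm : ∀ j' : Fin n,
      max ((∑ _k : Fin n, x) / (n * y) - x) 0 = 0 := by
    intro j'
    have hsum : (∑ _k : Fin n, x) = n * x := by
      simp [Finset.sum_const, mul_comm]
    rw [hsum]
    have h1 : (n : ℝ) * x / (n * y) = x / y := by
      field_simp
    rw [h1]
    have : x / y ≤ x := by
      rw [div_le_iff₀ hy0]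
      nlinarith [hx.1]
    exact max_eq_right (by linarith)
  rw [Finset.sum_eq_zero (fun j' _ => hterm j'), mul_zero] at hkey
  have hsum0 : ∑ j' : Fin n, c j' x y = 0 := hkey.symm
  have := Finset.sum_eq_zero_iff_of_nonneg
    (fun j' _ => hc_nonneg j' x y hx hy) |>.mp hsum0 j (Finset.mem_univ j)
  exact this
end
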